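/- Let X be a real Banach space, f ∈ X, L : X → X a continuous linear map, and N : X → X a continuous map. Define c_0 = f and, for m ≥ 0, c_{m+1} = L(c_m) + G_m, where G_0 = N(c_0) and G_i = N(∑_{j=0}^{i} c_j) − N(∑_{j=0}^{i−1} c_j) for i ≥ 1. If the series ∑_{i=0}^∞ c_i converges in X to some c, then c solves the functional equation c = f + L(c) + N(c). -/

import Mathlib

open Filter

/-- Consistency of the DJM: if `c₀ = f`, `c_{m+1} = L(c_m) + G_m` with
`G₀ = N(c₀)` and `G_i = N(∑_{j≤i} c_j) - N(∑_{j<i} c_j)` for `i ≥ 1`, and the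
series `∑ c_i` converges to `c`, then `c = f + L(c) + N(c)`. -/
theorem djm_limit_solves_equation
    (X : Type*) [NormedAddCommGroup X] [NormedSpace ℝ X] [CompleteSpace X]
    (f : X) (L : X →L[ℝ] X) (N : X → X) (hN : Continuous N)
    (c G : ℕ → X)
    (hc0 : c 0 = f)
    (hG0 : G 0 = N (c 0))
    (hG : ∀ i ≥ 1, G i = N (∑ j ∈ Finset.range (i + 1), c j)
        - N (∑ j ∈ Finset.range i, c j))
    (hrec : ∀ m, c (m + 1) = L (c m) + G m)
    (cl : X)
    (hconv : Tendsto (fun n => ∑ i ∈ Finset.range n, c i) atTop (nhds cl)) :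
    cl = f + L cl + N cl := by
  set S : ℕ → X := fun n => ∑ i ∈ Finset.range n, c i with hS
  -- telescoping sum of G
  have hGsum : ∀ n, 1 ≤ n → ∑ m ∈ Finset.range n, G m = N (S n) := by
    intro n hn
    induction n with
    | zero => omega
    | succ k ih =>
      rcases Nat.eq_or_lt_of_le hn with h | h
      · simp [← h, hG0, hS, Finset.sum_range_one]
      · have hk : 1 ≤ k := by omega
        rw [Finset.sum_range_succ, ih hk, hG k hk]
        simp [hS]
  -- key recurrence for partial sums
  have hkey : ∀ n, 1 ≤ n → S (n + 1) = f + L (S n) + N (S n) := by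
    intro n hn
    have : S (n + 1) = c 0 + ∑ m ∈ Finset.range n, c (m + 1) := by
      simp [hS, Finset.sum_range_succ', add_comm]
    rw [this, hc0]
    have : ∑ m ∈ Finset.range n, c (m + 1)
        = ∑ m ∈ Finset.range n, (L (c m) + G m) := by
      exact Finset.sum_congr rfl (fun m _ => hrec m)
    rw [this, Finset.sum_add_distrib, hGsum n hn, ← map_sum]
    simp [hS, add_assoc]
  -- take limits
  have h1 : Tendsto (fun n => S (n + 1)) atTop (nhds cl) :=
    hconv.comp (tendsto_add_atTop_nat 1)
  have h2 : Tendsto (fun n => f + L (S n) + N (S n)) atTop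
      (nhds (f + L cl + N cl)) :=
    ((tendsto_const_nhds.add ((L.continuous.tendsto cl).comp hconv)).add
      ((hN.tendsto cl).comp hconv))
  have heq : (fun n => S (n + 1)) =ᶠ[atTop] (fun n => f + L (S n) + N (S n)) := by
    filter_upwards [eventually_ge_atTop 1] with n hn using hkey n hn
  exact tendsto_nhds_unique h1 (h2.congr' heq.symm)
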